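/- Let d, n, k be natural numbers and m a positive integer coprime to 5 with 2n+1 = 5^k·m, and suppose d − k ≥ 2n+1. Let c ∈ ℤ[i] satisfy c·(1−2i)^{2n+1} ≡ 8·5^{d−k} (mod m·ℤ[i]). Then the complex number 8·5^d/((2n+1)·(1−2i)^{2n+1}) − c/m is (the image in ℂ of) a Gaussian integer; equivalently, 8·5^d/((2n+1)·(1−2i)^{2n+1}) ≡ c/m modulo ℤ[i]. -/

import Mathlib

open GaussianInt

theorem bbp_term_congruence (d n k : ℕ) (m : ℕ) (hm : 0 < m) (hcop : Nat.Coprime m 5)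
    (hfact : 2 * n + 1 = 5 ^ k * m) (hd : 2 * n + 1 + k ≤ d)
    (c : GaussianInt)
    (hc : (m : GaussianInt) ∣
      c * (1 - 2 * Zsqrtd.sqrtd) ^ (2 * n + 1) - 8 * 5 ^ (d - k)) :
    ∃ z : GaussianInt,
      8 * 5 ^ d / ((2 * (n : ℂ) + 1) * (1 - 2 * Complex.I) ^ (2 * n + 1))
          - GaussianInt.toComplex c / m = GaussianInt.toComplex z := by
  set α : GaussianInt := 1 - 2 * Zsqrtd.sqrtd with hα
  have h5 : (5 : GaussianInt) = α * (1 + 2 * Zsqrtd.sqrtd) := by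
    ext <;> simp [hα, Zsqrtd.ext_iff]
  obtain ⟨w, hw⟩ := hc
  have hdvd5 : α ^ (2*n+1) ∣ (5 : GaussianInt) ^ (d - k) :=
    dvd_trans (pow_dvd_pow_of_dvd ⟨_, h5⟩ _) (pow_dvd_pow 5 (by omega))
  have hdvdmw : α ^ (2*n+1) ∣ (m : GaussianInt) * w := by
    rw [← hw]
    exact dvd_sub (Dvd.intro_left _ rfl) (hdvd5.mul_left 8)
  have hcop' : IsCoprime (α ^ (2*n+1)) ((m : ℤ) : GaussianInt) := by
    apply IsCoprime.pow_left
    have h1 : IsCoprime (5 : ℤ) (m : ℤ) :=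
      Int.isCoprime_iff_gcd_eq_one.mpr (by exact hcop.symm)
    have h2 := h1.map (Int.castRingHom GaussianInt)
    have h2 : IsCoprime (5 : GaussianInt) ((m:ℤ) : GaussianInt) := by simpa using h2
    exact h2.of_isCoprime_of_dvd_left ⟨_, h5⟩
  rw [Int.cast_natCast] at hcop'
  obtain ⟨s, hs⟩ := hcop'.dvd_of_dvd_mul_left hdvdmw
  refine ⟨-s, ?_⟩
  have hA : toComplex α = 1 - 2 * Complex.I := by
    simp [hα, toComplex_def]
    ring
  have key : toComplex c * (1 - 2*Complex.I)^(2*n+1) - 8 * 5^(d-k)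
      = (m : ℂ) * ((1 - 2*Complex.I)^(2*n+1) * toComplex s) := by
    have := congrArg toComplex hw
    rw [hs] at this
    simpa [hA, map_ofNat] using this
  have hm0 : (m : ℂ) ≠ 0 := Nat.cast_ne_zero.mpr hm.ne'
  have hA0 : (1 - 2 * Complex.I) ≠ 0 := by
    intro h
    have := congrArg Complex.re h
    simp at this
  have hn : (2 * (n:ℂ) + 1) = 5 ^ k * m := by exact_mod_cast congrArg (Nat.cast : ℕ → ℂ) hfact
  have h5d : (5 : ℂ) ^ d = 5 ^ k * 5 ^ (d - k) := by
    rw [← pow_add]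
    congr 1
    omega
  rw [hn, h5d, map_neg]
  field_simp
  linear_combination (-1:ℂ) * key
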